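/- arXiv:2007.05139 — 3 statements merged into one kernel-verified Lean document; each statement's English description precedes it below -/
import Mathlib

section
/- For any faithful and private (n,K) mechanism and every position i ∈ {1,…,n}, the probability that Y_i is not erased satisfies P(Y_i ≠ ∗) ≤ ∑_{a∈𝒳} min_{u} P(X_i = a | X_K = u), where the minimum is over all u ∈ 𝒳^{|K|} with P(X_K = u) > 0. -/
open Finset
open scoped Classical

noncomputable section

namespace GenotypeHiding

variable {X : Type} [Fintype X] [DecidableEq X]

/-- Restriction of a sequence `x` to the sensitive positions `K`. -/
def restr {n : ℕ} (K : Finset (Fin n)) (x : Fin n → X) : ↥K → X := fun i => x (i : Fin n)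

/-- `P(X_K = u)` under the data distribution `p`. -/
def pK {n : ℕ} (p : (Fin n → X) → ℝ) (K : Finset (Fin n)) (u : ↥K → X) : ℝ :=
  ∑ x : Fin n → X, if restr K x = u then p x else 0

/-- `P(X_i = a ∧ X_K = u)` under the data distribution `p`. -/
def pIK {n : ℕ} (p : (Fin n → X) → ℝ) (K : Finset (Fin n)) (i : Fin n) (a : X)
    (u : ↥K → X) : ℝ :=
  ∑ x : Fin n → X, if x i = a ∧ restr K x = u then p x else 0

/-- `min_u P(X_i = a | X_K = u)`, the minimum being taken over all values `u` of the
sensitive positions with `P(X_K = u) > 0`. -/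
def minCond {n : ℕ} (p : (Fin n → X) → ℝ) (K : Finset (Fin n)) (i : Fin n) (a : X) : ℝ :=
  sInf {r : ℝ | ∃ u : ↥K → X, 0 < pK p K u ∧ r = pIK p K i a u / pK p K u}

/-- for any faithful and private `(n, K)` mechanism `w` and every position `i`,
`P(Y_i ≠ ∗) ≤ ∑_{a ∈ 𝒳} min_u P(X_i = a | X_K = u)`. -/
theorem nonErasureProbability_le {n : ℕ} (hn : 1 ≤ n) (hX : 2 ≤ Fintype.card X)
    (p : (Fin n → X) → ℝ) (hp0 : ∀ x, 0 ≤ p x) (hp1 : ∑ x : Fin n → X, p x = 1)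
    (K : Finset (Fin n))
    (w : (Fin n → X) → (Fin n → Option X) → ℝ)
    (hw0 : ∀ x y, 0 ≤ w x y) (hw1 : ∀ x, ∑ y : Fin n → Option X, w x y = 1)
    (hfaithful : ∀ x y, 0 < w x y → ∀ i : Fin n, y i = some (x i) ∨ y i = none)
    (hprivate : ∀ (u : ↥K → X) (y : Fin n → Option X),
      (∑ x : Fin n → X, if restr K x = u then p x * w x y else 0)
        = pK p K u * ∑ x : Fin n → X, p x * w x y)
    (i : Fin n) :
    (∑ x : Fin n → X, ∑ y : Fin n → Option X, if y i ≠ none then p x * w x y else 0)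
      ≤ ∑ a : X, minCond p K i a := by
  set S : X → ℝ := fun a => ∑ y : Fin n → Option X, ∑ x : Fin n → X,
      if y i = some a then p x * w x y else 0 with hS
  have key : ∀ a, S a ≤ minCond p K i a := by
    intro a
    obtain ⟨x0, hx0⟩ : ∃ x, 0 < p x := by
      by_contra h
      push_neg at h
      have h0 : ∑ x : Fin n → X, p x = 0 :=
        Finset.sum_eq_zero fun x _ => le_antisymm (h x) (hp0 x)
      rw [hp1] at h0; norm_num at h0
    have hne : {r : ℝ | ∃ u : ↥K → X, 0 < pK p K u ∧ r = pIK p K i a u / pK p K u}.Nonempty := by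
      refine ⟨_, restr K x0, ?_, rfl⟩
      have h1 : ∀ x ∈ (Finset.univ : Finset (Fin n → X)),
          0 ≤ (if restr K x = restr K x0 then p x else 0) := by
        intro x _; split
        · exact hp0 x
        · exact le_refl 0
      have h2 := Finset.single_le_sum h1 (Finset.mem_univ x0)
      rw [if_pos rfl] at h2
      exact lt_of_lt_of_le hx0 h2
    refine le_csInf hne ?_
    rintro r ⟨u, hu, rfl⟩
    rw [le_div_iff₀ hu]
    have step1 : S a * pK p K u
        = ∑ y : Fin n → Option X, ∑ x : Fin n → X,
            if y i = some a ∧ restr K x = u then p x * w x y else 0 := by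
      rw [hS, Finset.sum_mul]
      refine Finset.sum_congr rfl fun y _ => ?_
      by_cases hy : y i = some a
      · have h1 : (∑ x : Fin n → X, if y i = some a then p x * w x y else 0)
            = ∑ x : Fin n → X, p x * w x y :=
          Finset.sum_congr rfl fun x _ => if_pos hy
        rw [h1, mul_comm, ← hprivate u y]
        refine Finset.sum_congr rfl fun x _ => ?_
        by_cases hr : restr K x = u
        · rw [if_pos hr, if_pos ⟨hy, hr⟩]
        · rw [if_neg hr, if_neg (fun h => hr h.2)]
      · have h1 : (∑ x : Fin n → X, if y i = some a then p x * w x y else 0) = 0 :=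
          Finset.sum_eq_zero fun x _ => if_neg hy
        rw [h1, zero_mul]
        exact (Finset.sum_eq_zero fun x _ => if_neg (fun h => hy h.1)).symm
    rw [step1, Finset.sum_comm]
    have perx : ∀ x : Fin n → X,
        (∑ y : Fin n → Option X, if y i = some a ∧ restr K x = u then p x * w x y else 0)
          ≤ if x i = a ∧ restr K x = u then p x else 0 := by
      intro x
      by_cases hr : restr K x = u
      · by_cases ha : x i = a
        · rw [if_pos ⟨ha, hr⟩]
          calc (∑ y : Fin n → Option X,
                  if y i = some a ∧ restr K x = u then p x * w x y else 0)
              ≤ ∑ y : Fin n → Option X, p x * w x y := by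
                refine Finset.sum_le_sum fun y _ => ?_
                split
                · exact le_refl _
                · exact mul_nonneg (hp0 x) (hw0 x y)
            _ = p x := by rw [← Finset.mul_sum, hw1, mul_one]
        · rw [if_neg (fun h => ha h.1)]
          refine le_of_eq (Finset.sum_eq_zero fun y _ => ?_)
          split
          · rename_i h
            rcases lt_or_eq_of_le (hw0 x y) with hw | hw
            · rcases hfaithful x y hw i with h2 | h2
              · exact absurd (Option.some.inj (h.1.symm.trans h2)).symm ha
              · rw [h.1] at h2; exact absurd h2 (by simp)
            · rw [← hw, mul_zero]
          · rfl
      · rw [if_neg (fun h => hr h.2)]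
        refine le_of_eq (Finset.sum_eq_zero fun y _ => ?_)
        rw [if_neg (fun h => hr h.2)]
    calc (∑ x : Fin n → X, ∑ y : Fin n → Option X,
            if y i = some a ∧ restr K x = u then p x * w x y else 0)
        ≤ ∑ x : Fin n → X, if x i = a ∧ restr K x = u then p x else 0 :=
          Finset.sum_le_sum fun x _ => perx x
      _ = pIK p K i a u := rfl
  have inner : ∀ (y : Fin n → Option X) (x : Fin n → X),
      (∑ a : X, if y i = some a then p x * w x y else 0)
        = if y i ≠ none then p x * w x y else 0 := by
    intro y x
    cases hyi : y i with
    | none => simp [hyi]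
    | some b =>
      rw [if_pos (by simp [hyi])]
      rw [Finset.sum_eq_single b]
      · simp
      · intro c _ hc
        exact if_neg (fun h => hc (Option.some.inj h).symm)
      · intro hb; exact absurd (Finset.mem_univ b) hb
  have lhs_eq : (∑ x : Fin n → X, ∑ y : Fin n → Option X,
      if y i ≠ none then p x * w x y else 0) = ∑ a : X, S a := by
    rw [Finset.sum_comm]
    calc (∑ y : Fin n → Option X, ∑ x : Fin n → X,
            if y i ≠ none then p x * w x y else 0)
        = ∑ y : Fin n → Option X, ∑ x : Fin n → X, ∑ a : X,
            (if y i = some a then p x * w x y else 0) :=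
          Finset.sum_congr rfl fun y _ => Finset.sum_congr rfl fun x _ => (inner y x).symm
      _ = ∑ y : Fin n → Option X, ∑ a : X, ∑ x : Fin n → X,
            (if y i = some a then p x * w x y else 0) :=
          Finset.sum_congr rfl fun y _ => Finset.sum_comm
      _ = ∑ a : X, ∑ y : Fin n → Option X, ∑ x : Fin n → X,
            (if y i = some a then p x * w x y else 0) := Finset.sum_comm
      _ = ∑ a : X, S a := rfl
  rw [lhs_eq]
  exact Finset.sum_le_sum fun a _ => key a

end GenotypeHiding
end
end

section
/- Any achievable rate R must satisfy R ≤ (1/n) ∑_{i=1}^{n} ∑_{a∈𝒳} min_{u} P(X_i = a | X_K = u), where the minimum is over all u ∈ 𝒳^{|K|} with P(X_K = u) > 0. That is, every faithful private mechanism has rate 1 − (1/n)·E[e(Y)] at most this quantity. -/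
open Finset
open scoped Classical

noncomputable section

namespace GenotypeHiding

variable {X : Type} [Fintype X] [DecidableEq X]

/-- Number of erasures `e(y) = #{i : y_i = ∗}` in an output sequence. -/
def numErasures {n : ℕ} (y : Fin n → Option X) : ℕ :=
  (Finset.univ.filter (fun i : Fin n => y i = none)).card

/-- The rate `1 - (1/n) E[e(Y)]` of a mechanism `w` for the data distribution `p`. -/
def rate {n : ℕ} (p : (Fin n → X) → ℝ) (w : (Fin n → X) → (Fin n → Option X) → ℝ) : ℝ :=
  1 - (1 / (n : ℝ)) *
    ∑ x : Fin n → X, ∑ y : Fin n → Option X, p x * w x y * (numErasures y : ℝ)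

/-- any achievable rate `R` satisfies
`R ≤ (1/n) ∑_i ∑_a min_u P(X_i = a | X_K = u)`; that is, every faithful private
mechanism has rate at most this quantity. -/
theorem achievableRate_le {n : ℕ} (hn : 1 ≤ n) (hX : 2 ≤ Fintype.card X)
    (p : (Fin n → X) → ℝ) (hp0 : ∀ x, 0 ≤ p x) (hp1 : ∑ x : Fin n → X, p x = 1)
    (K : Finset (Fin n)) (R : ℝ)
    (hach : ∃ w : (Fin n → X) → (Fin n → Option X) → ℝ,
      (∀ x y, 0 ≤ w x y) ∧ (∀ x, ∑ y : Fin n → Option X, w x y = 1) ∧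
      (∀ x y, 0 < w x y → ∀ i : Fin n, y i = some (x i) ∨ y i = none) ∧
      (∀ (u : ↥K → X) (y : Fin n → Option X),
        (∑ x : Fin n → X, if restr K x = u then p x * w x y else 0)
          = pK p K u * ∑ x : Fin n → X, p x * w x y) ∧
      R ≤ rate p w) :
    R ≤ (1 / (n : ℝ)) * ∑ i : Fin n, ∑ a : X, minCond p K i a := by
  obtain ⟨w, hw0, hw1, hfaith, hpriv, hR⟩ := hach
  have hn0 : (0 : ℝ) < (n : ℝ) := by exact_mod_cast hn
  set Q : (Fin n → Option X) → ℝ := fun y => ∑ x : Fin n → X, p x * w x y with hQdef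
  set S : Fin n → X → ℝ := fun i a =>
    ∑ y : Fin n → Option X, if y i = some a then Q y else 0 with hSdef
  -- total output probability is 1
  have hQ1 : ∑ y : Fin n → Option X, Q y = 1 := by
    rw [hQdef]
    rw [Finset.sum_comm]
    calc ∑ x : Fin n → X, ∑ y : Fin n → Option X, p x * w x y
        = ∑ x : Fin n → X, p x := by
          apply Finset.sum_congr rfl
          intro x _
          rw [← Finset.mul_sum, hw1, mul_one]
      _ = 1 := hp1
  -- erasure count as a sum of indicators
  have he : ∀ y : Fin n → Option X,
      (numErasures y : ℝ) = ∑ i : Fin n, if y i = none then (1 : ℝ) else 0 := by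
    intro y
    unfold numErasures
    rw [Finset.card_filter]
    push_cast
    rfl
  -- expected erasures
  have hE : (∑ x : Fin n → X, ∑ y : Fin n → Option X, p x * w x y * (numErasures y : ℝ))
      = ∑ i : Fin n, ∑ y : Fin n → Option X, (if y i = none then Q y else 0) := by
    rw [Finset.sum_comm]
    calc ∑ y : Fin n → Option X, ∑ x : Fin n → X, p x * w x y * (numErasures y : ℝ)
        = ∑ y : Fin n → Option X, Q y * (numErasures y : ℝ) := by
          apply Finset.sum_congr rfl
          intro y _
          rw [hQdef, Finset.sum_mul]
      _ = ∑ y : Fin n → Option X, ∑ i : Fin n, (if y i = none then Q y else 0) := by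
          apply Finset.sum_congr rfl
          intro y _
          rw [he y, Finset.mul_sum]
          apply Finset.sum_congr rfl
          intro i _
          split_ifs <;> ring
      _ = _ := Finset.sum_comm
  -- per-position decomposition
  have hNi : ∀ i : Fin n,
      (∑ y : Fin n → Option X, (if y i = none then Q y else 0)) = 1 - ∑ a : X, S i a := by
    intro i
    have key : (∑ y : Fin n → Option X, (if y i = none then Q y else 0)) + ∑ a : X, S i a
        = 1 := by
      rw [hSdef]
      rw [Finset.sum_comm]
      rw [← Finset.sum_add_distrib, ← hQ1]
      apply Finset.sum_congr rfl
      intro y _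
      cases h : y i with
      | none => simp [h]
      | some b => simp [h, Finset.sum_ite_eq]
    linarith
  -- rate equals (1/n) ∑ᵢ ∑ₐ S i a
  have hrate : rate p w = (1 / (n : ℝ)) * ∑ i : Fin n, ∑ a : X, S i a := by
    unfold rate
    rw [hE]
    have : (∑ i : Fin n, ∑ y : Fin n → Option X, (if y i = none then Q y else 0))
        = (n : ℝ) - ∑ i : Fin n, ∑ a : X, S i a := by
      rw [Finset.sum_congr rfl (fun i _ => hNi i), Finset.sum_sub_distrib]
      simp
    rw [this]
    field_simp
    ring
  -- positivity of pK total
  have hpKsum : ∑ u : ↥K → X, pK p K u = 1 := by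
    unfold pK
    rw [Finset.sum_comm]
    calc ∑ x : Fin n → X, ∑ u : ↥K → X, (if restr K x = u then p x else 0)
        = ∑ x : Fin n → X, p x := by
          apply Finset.sum_congr rfl
          intro x _
          simp [Finset.sum_ite_eq]
      _ = 1 := hp1
  have hexu : ∃ u : ↥K → X, 0 < pK p K u := by
    by_contra h
    push_neg at h
    have : ∑ u : ↥K → X, pK p K u ≤ 0 := Finset.sum_nonpos (fun u _ => h u)
    linarith
  -- the key bound : S i a ≤ minCond p K i a
  have hSle : ∀ (i : Fin n) (a : X), S i a ≤ minCond p K i a := by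
    intro i a
    apply le_csInf
    · obtain ⟨u, hu⟩ := hexu
      exact ⟨pIK p K i a u / pK p K u, u, hu, rfl⟩
    · rintro r ⟨u, hu, rfl⟩
      rw [le_div_iff₀ hu]
      calc S i a * pK p K u
          = ∑ y : Fin n → Option X,
              (if y i = some a then pK p K u * Q y else 0) := by
            rw [hSdef, Finset.sum_mul]
            apply Finset.sum_congr rfl
            intro y _
            split_ifs <;> ring
        _ = ∑ y : Fin n → Option X, ∑ x : Fin n → X,
              (if y i = some a ∧ restr K x = u then p x * w x y else 0) := by
            apply Finset.sum_congr rfl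
            intro y _
            rw [← hpriv u y]
            split_ifs with h
            · apply Finset.sum_congr rfl
              intro x _
              simp [h]
            · symm
              apply Finset.sum_eq_zero
              intro x _
              rw [if_neg (by tauto)]
        _ = ∑ x : Fin n → X, ∑ y : Fin n → Option X,
              (if y i = some a ∧ restr K x = u then p x * w x y else 0) :=
            Finset.sum_comm
        _ ≤ ∑ x : Fin n → X, (if x i = a ∧ restr K x = u then p x else 0) := by
            apply Finset.sum_le_sum
            intro x _
            by_cases hr : restr K x = u
            · by_cases hxa : x i = a
              · rw [if_pos ⟨hxa, hr⟩]
                calc ∑ y : Fin n → Option X,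
                      (if y i = some a ∧ restr K x = u then p x * w x y else 0)
                    ≤ ∑ y : Fin n → Option X, p x * w x y := by
                      apply Finset.sum_le_sum
                      intro y _
                      split_ifs
                      · exact le_refl _
                      · exact mul_nonneg (hp0 x) (hw0 x y)
                  _ = p x := by rw [← Finset.mul_sum, hw1, mul_one]
              · rw [if_neg (by tauto)]
                apply le_of_eq
                apply Finset.sum_eq_zero
                intro y _
                split_ifs with h
                · obtain ⟨hy, -⟩ := h
                  rcases lt_or_eq_of_le (hw0 x y) with hpos | heq
                  · rcases hfaith x y hpos i with h1 | h1
                    · exact absurd (Option.some.inj (h1.symm.trans hy)) hxa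
                    · exact absurd (h1.symm.trans hy) (by simp)
                  · rw [← heq, mul_zero]
                · rfl
            · rw [if_neg (by tauto)]
              apply le_of_eq
              apply Finset.sum_eq_zero
              intro y _
              rw [if_neg (by tauto)]
        _ = pIK p K i a u := rfl
  -- conclude
  have hfinal : rate p w ≤ (1 / (n : ℝ)) * ∑ i : Fin n, ∑ a : X, minCond p K i a := by
    rw [hrate]
    apply mul_le_mul_of_nonneg_left _ (by positivity)
    apply Finset.sum_le_sum
    intro i _
    exact Finset.sum_le_sum (fun a _ => hSle i a)
  linarith

end GenotypeHiding
end
end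

section
/- Under the sequential privacy mechanism, for every i, every value u' of X_K with positive probability, and every history y_{[i−1]} occurring with positive probability: P(Y_i = ∗ | X_K = u', Y_{[i−1]} = y_{[i−1]}) = 1 − ∑_{a∈𝒳} min_{u} P(X_i = a | X_K = u, Y_{[i−1]} = y_{[i−1]}), and for every a ∈ 𝒳, P(Y_i = a | X_K = u', Y_{[i−1]} = y_{[i−1]}) = min_{u} P(X_i = a | X_K = u, Y_{[i−1]} = y_{[i−1]}); in particular both conditional probabilities do not depend on u'. -/
open Finset
open scoped Classical

noncomputable section

namespace GenotypeHiding

variable {X : Type} [Fintype X] [DecidableEq X]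

/-- `y` agrees with the history `h` on all coordinates `j` with `j < t`
(i.e. the event `Y_{[t]} = h_{[t]}`, zero-based). -/
def agreeN {n : ℕ} (t : ℕ) (y h : Fin n → Option X) : Prop :=
  ∀ j : Fin n, (j : ℕ) < t → y j = h j

/-- `P(X = x, Y_{[t]} = h_{[t]})` under the joint law `J` of `(X, Y)`. -/
def prXH {n : ℕ} (J : (Fin n → X) → (Fin n → Option X) → ℝ) (t : ℕ)
    (x : Fin n → X) (h : Fin n → Option X) : ℝ :=
  ∑ y : Fin n → Option X, if agreeN t y h then J x y else 0

/-- `P(Y_i = b, X = x, Y_{[t]} = h_{[t]})` under the joint law `J`. -/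
def prXHY {n : ℕ} (J : (Fin n → X) → (Fin n → Option X) → ℝ) (t : ℕ)
    (x : Fin n → X) (h : Fin n → Option X) (i : Fin n) (b : Option X) : ℝ :=
  ∑ y : Fin n → Option X, if y i = b ∧ agreeN t y h then J x y else 0

/-- `P(Y_{[t]} = h_{[t]})` under the joint law `J`. -/
def prH {n : ℕ} (J : (Fin n → X) → (Fin n → Option X) → ℝ) (t : ℕ)
    (h : Fin n → Option X) : ℝ :=
  ∑ x : Fin n → X, prXH J t x h

/-- `P(X_K = u, Y_{[t]} = h_{[t]})` under the joint law `J`. -/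
def prKH {n : ℕ} (J : (Fin n → X) → (Fin n → Option X) → ℝ) (K : Finset (Fin n))
    (t : ℕ) (u : ↥K → X) (h : Fin n → Option X) : ℝ :=
  ∑ x : Fin n → X, ∑ y : Fin n → Option X,
    if restr K x = u ∧ agreeN t y h then J x y else 0

/-- `P(X_i = a, X_K = u, Y_{[t]} = h_{[t]})` under the joint law `J`. -/
def prIKH {n : ℕ} (J : (Fin n → X) → (Fin n → Option X) → ℝ) (K : Finset (Fin n))
    (t : ℕ) (i : Fin n) (a : X) (u : ↥K → X) (h : Fin n → Option X) : ℝ :=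
  ∑ x : Fin n → X, ∑ y : Fin n → Option X,
    if x i = a ∧ restr K x = u ∧ agreeN t y h then J x y else 0

/-- `P(Y_i = b, X_K = u, Y_{[t]} = h_{[t]})` under the joint law `J`. -/
def prYKH {n : ℕ} (J : (Fin n → X) → (Fin n → Option X) → ℝ) (K : Finset (Fin n))
    (t : ℕ) (i : Fin n) (b : Option X) (u : ↥K → X) (h : Fin n → Option X) : ℝ :=
  ∑ x : Fin n → X, ∑ y : Fin n → Option X,
    if y i = b ∧ restr K x = u ∧ agreeN t y h then J x y else 0

/-- `P(X_i = a | X_K = u, Y_{[t]} = h_{[t]})` under the joint law `J`. -/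
def condX {n : ℕ} (J : (Fin n → X) → (Fin n → Option X) → ℝ) (K : Finset (Fin n))
    (t : ℕ) (i : Fin n) (a : X) (u : ↥K → X) (h : Fin n → Option X) : ℝ :=
  prIKH J K t i a u h / prKH J K t u h

/-- `min_u P(X_i = a | X_K = u, Y_{[t]} = h_{[t]})`, the minimum being over all `u` with
`P(X_K = u, Y_{[t]} = h_{[t]}) > 0`. -/
def minC {n : ℕ} (J : (Fin n → X) → (Fin n → Option X) → ℝ) (K : Finset (Fin n))
    (t : ℕ) (i : Fin n) (a : X) (h : Fin n → Option X) : ℝ :=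
  sInf {r : ℝ | ∃ u : ↥K → X, 0 < prKH J K t u h ∧ r = condX J K t i a u h}

/-- `J` is the joint law of `(X, Y)` where `Y` is generated from `X ∼ p` by the sequential
privacy mechanism: `Y_i ∈ {X_i, ∗}`, and conditionally on `X = x` and the previously
generated outputs `Y_{[i-1]} = y_{[i-1]}`, the mechanism releases `Y_i = x_i` with
probability `min_u P(X_i = x_i | X_K = u, Y_{[i-1]}) / P(X_i = x_i | X_K = x_K, Y_{[i-1]})`,
and erases (`Y_i = ∗`) with the complementary probability. -/
def IsSequentialMechanism {n : ℕ} (p : (Fin n → X) → ℝ) (K : Finset (Fin n))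
    (J : (Fin n → X) → (Fin n → Option X) → ℝ) : Prop :=
  (∀ x y, 0 ≤ J x y) ∧
  (∀ x, ∑ y : Fin n → Option X, J x y = p x) ∧
  (∀ x y, 0 < J x y → ∀ i : Fin n, y i = some (x i) ∨ y i = none) ∧
  (∀ (i : Fin n) (x : Fin n → X) (h : Fin n → Option X), 0 < prXH J (i : ℕ) x h →
    prXHY J (i : ℕ) x h i (some (x i))
      = (minC J K (i : ℕ) i (x i) h / condX J K (i : ℕ) i (x i) (restr K x) h)
          * prXH J (i : ℕ) x h)


section Aux

variable {n : ℕ} (J : (Fin n → X) → (Fin n → Option X) → ℝ) (K : Finset (Fin n))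

lemma prXH_nonneg (hJ0 : ∀ x y, 0 ≤ J x y) (t : ℕ) (x : Fin n → X) (h : Fin n → Option X) :
    0 ≤ prXH J t x h := by
  apply Finset.sum_nonneg; intro y _; split_ifs
  · exact hJ0 x y
  · exact le_rfl

lemma prXHY_nonneg (hJ0 : ∀ x y, 0 ≤ J x y) (t : ℕ) (x : Fin n → X) (h : Fin n → Option X)
    (i : Fin n) (b : Option X) : 0 ≤ prXHY J t x h i b := by
  apply Finset.sum_nonneg; intro y _; split_ifs
  · exact hJ0 x y
  · exact le_rfl

lemma prXHY_le (hJ0 : ∀ x y, 0 ≤ J x y) (t : ℕ) (x : Fin n → X) (h : Fin n → Option X)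
    (i : Fin n) (b : Option X) : prXHY J t x h i b ≤ prXH J t x h := by
  apply Finset.sum_le_sum; intro y _
  split_ifs with h1 h2
  · exact le_rfl
  · exact absurd h1.2 h2
  · exact hJ0 x y
  · exact le_rfl

lemma prXHY_of_prXH_zero (hJ0 : ∀ x y, 0 ≤ J x y) (t : ℕ) (x : Fin n → X)
    (h : Fin n → Option X) (i : Fin n) (b : Option X) (h0 : prXH J t x h = 0) :
    prXHY J t x h i b = 0 :=
  le_antisymm (h0 ▸ prXHY_le J hJ0 t x h i b) (prXHY_nonneg J hJ0 t x h i b)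

lemma prYKH_eq (t : ℕ) (i : Fin n) (b : Option X) (u : ↥K → X) (h : Fin n → Option X) :
    prYKH J K t i b u h = ∑ x : Fin n → X, if restr K x = u then prXHY J t x h i b else 0 := by
  unfold prYKH prXHY
  refine Finset.sum_congr rfl fun x _ => ?_
  by_cases hr : restr K x = u <;> simp [hr]

lemma prKH_eq (t : ℕ) (u : ↥K → X) (h : Fin n → Option X) :
    prKH J K t u h = ∑ x : Fin n → X, if restr K x = u then prXH J t x h else 0 := by
  unfold prKH prXH
  refine Finset.sum_congr rfl fun x _ => ?_
  by_cases hr : restr K x = u <;> simp [hr]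

lemma prIKH_eq (t : ℕ) (i : Fin n) (a : X) (u : ↥K → X) (h : Fin n → Option X) :
    prIKH J K t i a u h
      = ∑ x : Fin n → X, if x i = a ∧ restr K x = u then prXH J t x h else 0 := by
  unfold prIKH prXH
  refine Finset.sum_congr rfl fun x _ => ?_
  by_cases h1 : x i = a <;> by_cases hr : restr K x = u <;> simp [h1, hr]

lemma sum_prXHY (t : ℕ) (x : Fin n → X) (h : Fin n → Option X) (i : Fin n) :
    ∑ b : Option X, prXHY J t x h i b = prXH J t x h := by
  unfold prXHY prXH
  rw [Finset.sum_comm]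
  refine Finset.sum_congr rfl fun y _ => ?_
  by_cases h2 : agreeN t y h <;> simp [h2, Finset.sum_ite_eq]

lemma prXHY_eq_zero (hJ0 : ∀ x y, 0 ≤ J x y)
    (hsupp : ∀ x y, 0 < J x y → ∀ i : Fin n, y i = some (x i) ∨ y i = none)
    (t : ℕ) (x : Fin n → X) (h : Fin n → Option X) (i : Fin n) (a : X) (hxa : x i ≠ a) :
    prXHY J t x h i (some a) = 0 := by
  unfold prXHY
  apply Finset.sum_eq_zero; intro y _
  split_ifs with hc
  · rcases hc with ⟨hy, _⟩
    by_contra hne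
    have hpos : 0 < J x y := lt_of_le_of_ne (hJ0 x y) (Ne.symm hne)
    rcases hsupp x y hpos i with h1 | h1
    · rw [hy] at h1; exact hxa (Option.some.inj h1).symm
    · rw [hy] at h1; exact Option.some_ne_none a h1
  · rfl

lemma prKH_nonneg (hJ0 : ∀ x y, 0 ≤ J x y) (t : ℕ) (u : ↥K → X) (h : Fin n → Option X) :
    0 ≤ prKH J K t u h := by
  rw [prKH_eq]
  apply Finset.sum_nonneg; intro x _; split_ifs
  · exact prXH_nonneg J hJ0 t x h
  · exact le_rfl

lemma prIKH_nonneg (hJ0 : ∀ x y, 0 ≤ J x y) (t : ℕ) (i : Fin n) (a : X) (u : ↥K → X)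
    (h : Fin n → Option X) : 0 ≤ prIKH J K t i a u h := by
  rw [prIKH_eq]
  apply Finset.sum_nonneg; intro x _; split_ifs
  · exact prXH_nonneg J hJ0 t x h
  · exact le_rfl

lemma minC_nonneg (hJ0 : ∀ x y, 0 ≤ J x y) (t : ℕ) (i : Fin n) (a : X)
    (h : Fin n → Option X) (u' : ↥K → X) (hpos : 0 < prKH J K t u' h) :
    0 ≤ minC J K t i a h := by
  refine le_csInf ⟨condX J K t i a u' h, u', hpos, rfl⟩ ?_
  rintro r ⟨u, hu, rfl⟩
  exact div_nonneg (prIKH_nonneg J K hJ0 t i a u h) hu.le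

lemma minC_le (hJ0 : ∀ x y, 0 ≤ J x y) (t : ℕ) (i : Fin n) (a : X)
    (h : Fin n → Option X) (u' : ↥K → X) (hpos : 0 < prKH J K t u' h) :
    minC J K t i a h ≤ condX J K t i a u' h := by
  apply csInf_le
  · refine ⟨0, ?_⟩
    rintro r ⟨u, hu, rfl⟩
    exact div_nonneg (prIKH_nonneg J K hJ0 t i a u h) hu.le
  · exact ⟨u', hpos, rfl⟩

end Aux

/-- under the sequential privacy mechanism, for every `i`, every value `u'` of
`X_K` and every history `y_{[i-1]} = h` with `P(X_K = u', Y_{[i-1]} = h) > 0`, the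
conditional probability of erasure is
`P(Y_i = ∗ | X_K = u', Y_{[i-1]} = h) = 1 - ∑_a min_u P(X_i = a | X_K = u, Y_{[i-1]} = h)`,
and for every `a ∈ 𝒳`,
`P(Y_i = a | X_K = u', Y_{[i-1]} = h) = min_u P(X_i = a | X_K = u, Y_{[i-1]} = h)`;
in particular neither conditional probability depends on `u'`. -/
theorem sequentialMechanism_condProb {n : ℕ} (hn : 1 ≤ n) (hX : 2 ≤ Fintype.card X)
    (p : (Fin n → X) → ℝ) (hp0 : ∀ x, 0 ≤ p x) (hp1 : ∑ x : Fin n → X, p x = 1)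
    (K : Finset (Fin n))
    (J : (Fin n → X) → (Fin n → Option X) → ℝ)
    (hJ : IsSequentialMechanism p K J)
    (i : Fin n) (u' : ↥K → X) (h : Fin n → Option X)
    (hpos : 0 < prKH J K (i : ℕ) u' h) :
    prYKH J K (i : ℕ) i none u' h / prKH J K (i : ℕ) u' h
        = 1 - ∑ a : X, minC J K (i : ℕ) i a h ∧
    ∀ a : X, prYKH J K (i : ℕ) i (some a) u' h / prKH J K (i : ℕ) u' h
        = minC J K (i : ℕ) i a h := by
  obtain ⟨hJ0, hJp, hsupp, hmech⟩ := hJ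
  set t := (i : ℕ) with ht
  have hKne : prKH J K t u' h ≠ 0 := ne_of_gt hpos
  -- key identity for each a
  have key : ∀ a : X, prYKH J K t i (some a) u' h = minC J K t i a h * prKH J K t u' h := by
    intro a
    set c : ℝ := minC J K t i a h / condX J K t i a u' h with hc
    have step : prYKH J K t i (some a) u' h = c * prIKH J K t i a u' h := by
      rw [prYKH_eq, prIKH_eq, Finset.mul_sum]
      refine Finset.sum_congr rfl fun x _ => ?_
      by_cases hr : restr K x = u'
      · by_cases hxa : x i = a
        · rw [if_pos hr, if_pos ⟨hxa, hr⟩]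
          by_cases hxh : 0 < prXH J t x h
          · have := hmech i x h hxh
            rw [hxa, hr] at this
            rw [this]
          · have h0 : prXH J t x h = 0 :=
              le_antisymm (not_lt.mp hxh) (prXH_nonneg J hJ0 t x h)
            rw [h0, prXHY_of_prXH_zero J hJ0 t x h i (some a) h0, mul_zero]
        · rw [if_pos hr, if_neg (fun hh => hxa hh.1),
            prXHY_eq_zero J hJ0 hsupp t x h i a hxa, mul_zero]
      · rw [if_neg hr, if_neg (fun hh => hr hh.2), mul_zero]
    rw [step]
    by_cases hI : prIKH J K t i a u' h = 0
    · have hcond : condX J K t i a u' h = 0 := by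
        rw [condX, hI, zero_div]
      have h1 : minC J K t i a h = 0 :=
        le_antisymm (hcond ▸ minC_le J K hJ0 t i a h u' hpos)
          (minC_nonneg J K hJ0 t i a h u' hpos)
      rw [hI, h1, mul_zero, zero_mul]
    · rw [hc, condX]
      field_simp
  constructor
  · -- erasure case via total sum
    have hsum : ∑ b : Option X, prYKH J K t i b u' h = prKH J K t u' h := by
      rw [prKH_eq]
      simp_rw [prYKH_eq]
      rw [Finset.sum_comm]
      refine Finset.sum_congr rfl fun x _ => ?_
      by_cases hr : restr K x = u'
      · simp only [if_pos hr]; exact sum_prXHY J t x h i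
      · simp [if_neg hr]
    rw [Fintype.sum_option] at hsum
    have hnone : prYKH J K t i none u' h
        = (1 - ∑ a : X, minC J K t i a h) * prKH J K t u' h := by
      have : prYKH J K t i none u' h
          = prKH J K t u' h - ∑ a : X, prYKH J K t i (some a) u' h := by
        linarith [hsum]
      rw [this]
      simp_rw [key]
      rw [← Finset.sum_mul]
      ring
    rw [hnone, mul_div_assoc, div_self hKne, mul_one]
  · intro a
    rw [key a, mul_div_assoc, div_self hKne, mul_one]

end GenotypeHiding
end
end
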